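/- arXiv:2311.12659 — 2 statements merged into one kernel-verified Lean document; each statement's English description precedes it below -/
import Mathlib

section
/- Let u(x₁,x₂) = cos(2πx₁/3) − 2·cos(πx₂/√3)·cos(πx₁/3). Then ∂u/∂x₂ > 0 at every interior point of the triangle T with vertices (0,0), (1,0), (0,√3), i.e. at every point with 0 < x₁ < 1, 0 < x₂ and x₂/√3 + x₁ < 1. -/
open Real

/-- For `u(x₁,x₂) = cos(2πx₁/3) − 2 cos(πx₂/√3) cos(πx₁/3)`, the partial derivative
`∂u/∂x₂` is positive at every interior point of the triangle with vertices
`(0,0)`, `(1,0)`, `(0,√3)`. -/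
theorem stmt_1
    (u : ℝ → ℝ → ℝ)
    (hu : ∀ x₁ x₂ : ℝ, u x₁ x₂ =
      cos (2 * π * x₁ / 3) - 2 * cos (π * x₂ / Real.sqrt 3) * cos (π * x₁ / 3)) :
    ∀ x₁ x₂ : ℝ, 0 < x₁ → x₁ < 1 → 0 < x₂ → x₂ / Real.sqrt 3 + x₁ < 1 →
      0 < deriv (fun t => u x₁ t) x₂ := by
  intro x₁ x₂ h1 h2 h3 h4
  have hs3 : (0:ℝ) < Real.sqrt 3 := by positivity
  have hfun : (fun t => u x₁ t)
      = fun t => cos (2 * π * x₁ / 3) - 2 * cos (π * t / Real.sqrt 3) * cos (π * x₁ / 3) :=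
    funext fun t => hu x₁ t
  have hlin : HasDerivAt (fun t : ℝ => π * t / Real.sqrt 3) (π / Real.sqrt 3) x₂ := by
    have : HasDerivAt (fun t : ℝ => (π / Real.sqrt 3) * t) (π / Real.sqrt 3) x₂ := by
      simpa using (hasDerivAt_id x₂).const_mul (π / Real.sqrt 3)
    convert this using 2 with t
    ring
  have hcos : HasDerivAt (fun t : ℝ => cos (π * t / Real.sqrt 3))
      (-Real.sin (π * x₂ / Real.sqrt 3) * (π / Real.sqrt 3)) x₂ := hlin.cos
  have hD : HasDerivAt (fun t => u x₁ t)
      (2 * Real.sin (π * x₂ / Real.sqrt 3) * (π / Real.sqrt 3) * cos (π * x₁ / 3)) x₂ := by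
    rw [hfun]
    have := ((hcos.const_mul 2).mul_const (cos (π * x₁ / 3))).const_sub
      (cos (2 * π * x₁ / 3))
    exact this.congr_deriv (by ring)
  rw [hD.deriv]
  have hsin : 0 < Real.sin (π * x₂ / Real.sqrt 3) := by
    apply Real.sin_pos_of_pos_of_lt_pi
    · positivity
    · have hx2 : x₂ / Real.sqrt 3 < 1 := by linarith
      have : π * x₂ / Real.sqrt 3 = π * (x₂ / Real.sqrt 3) := by ring
      rw [this]
      nlinarith [Real.pi_pos]
  have hcosx : 0 < cos (π * x₁ / 3) := by
    apply Real.cos_pos_of_mem_Ioo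
    constructor
    · nlinarith [Real.pi_pos]
    · have : π * x₁ / 3 < π / 2 := by nlinarith [Real.pi_pos]
      linarith
  positivity
end

section
/- Let l₁, l₂ > 0 and α ∈ [π/2, π). Then l₁² + l₂² − 2·l₁·l₂·cos(α) ≥ (2·l₁·l₂·cos(α/2)·2/(l₁+l₂))², i.e. the squared length of the side opposite the angle α in a triangle with adjacent sides l₁, l₂ is at least the square of twice the length 2l₁l₂cos(α/2)/(l₁+l₂) of the internal angle bisector from that vertex. -/
open Real

/-- For sides `l₁, l₂ > 0` meeting at an angle `α ∈ [π/2, π)`, the squared length of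
the opposite side is at least the square of twice the internal bisector length. -/
theorem stmt_10 (l₁ l₂ α : ℝ) (hl₁ : 0 < l₁) (hl₂ : 0 < l₂)
    (hα1 : π / 2 ≤ α) (hα2 : α < π) :
    l₁ ^ 2 + l₂ ^ 2 - 2 * l₁ * l₂ * cos α ≥
      (2 * l₁ * l₂ * cos (α / 2) * 2 / (l₁ + l₂)) ^ 2 := by
  have hcos : cos α ≤ 0 := Real.cos_nonpos_of_pi_div_two_le_of_le hα1 (le_of_lt (by linarith [Real.pi_pos]))
  have hc2 : cos (α / 2) ^ 2 = 1 / 2 + cos α / 2 := by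
    have := Real.cos_sq (α / 2)
    rwa [show 2 * (α / 2) = α by ring] at this
  have hc0 : 0 ≤ cos (α / 2) := Real.cos_nonneg_of_mem_Icc
    ⟨by linarith [Real.pi_pos], by linarith⟩
  have hc1 : cos (α / 2) ^ 2 ≤ 1 / 2 := by rw [hc2]; linarith
  have hcval : cos α = 2 * cos (α / 2) ^ 2 - 1 := by rw [hc2]; ring
  have hs : (0:ℝ) < l₁ + l₂ := by linarith
  rw [ge_iff_le, div_pow, div_le_iff₀ (by positivity)]
  rw [hcval]
  nlinarith [sq_nonneg (l₁ - l₂), mul_pos hl₁ hl₂, sq_nonneg (cos (α / 2)),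
    mul_nonneg (mul_nonneg (mul_pos hl₁ hl₂).le (mul_pos hl₁ hl₂).le) (sub_nonneg.2 hc1),
    mul_nonneg (mul_nonneg (sq_nonneg (l₁ - l₂)) (mul_pos hl₁ hl₂).le) (sq_nonneg (cos (α / 2))),
    mul_nonneg (mul_nonneg (sq_nonneg (l₁ - l₂)) (sq_nonneg (l₁ + l₂))) (sq_nonneg (cos (α / 2)))]
end
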